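/- Let Γ be a finite simple graph that is the join of two nonempty graphs Γ₁ and Γ₂. Then rank(A_Γ) = rank(A_{Γ₁}) + rank(A_{Γ₂}); in particular rank(A_Γ) ≥ 2. -/

import Mathlib

open scoped Pointwise

/-- `algA G i` is the set of elements of `G` whose centralizer contains a
free abelian subgroup of rank at most `i` as a subgroup of finite index. -/
def algA (G : Type*) [Group G] (i : ℕ) : Set G :=
  {g : G | ∃ H : Subgroup (Subgroup.centralizer ({g} : Set G)),
    H.FiniteIndex ∧ ∃ n : ℕ, n ≤ i ∧ Nonempty (H ≃* Multiplicative (Fin n → ℤ))}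

/-- `G` is covered by finitely many left translates of `algA G i`. -/
def algCovers (G : Type*) [Group G] (i : ℕ) : Prop :=
  ∃ F : Finset G, (⋃ g ∈ F, g • algA G i) = Set.univ

/-- `r(G)`: the least `i` such that `G` is a finite union of translates of `algA G i`
(`⊤` if there is no such `i`). -/
noncomputable def algr (G : Type*) [Group G] : ℕ∞ :=
  sInf {n : ℕ∞ | ∃ i : ℕ, n = (i : ℕ∞) ∧ algCovers G i}

/-- The algebraic rank of `G`: the supremum of `r(G*)` over all finite index
subgroups `G*` of `G`. -/
noncomputable def algRank (G : Type*) [Group G] : ℕ∞ :=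
  ⨆ (H : Subgroup G) (_ : H.FiniteIndex), algr H

/-- The commutator relators of a right-angled Artin group: one relator
`u v u⁻¹ v⁻¹` for each edge `{u, v}` of the graph. -/
def raagRels {V : Type*} (G : SimpleGraph V) : Set (FreeGroup V) :=
  {r | ∃ u v : V, G.Adj u v ∧
    r = FreeGroup.of u * FreeGroup.of v * (FreeGroup.of u)⁻¹ * (FreeGroup.of v)⁻¹}

/-- The right-angled Artin group `A_Γ` of a finite simple graph `Γ`:
`⟨V ∣ uv = vu whenever {u,v} is an edge⟩`. -/
def RAAG {V : Type*} (G : SimpleGraph V) : Type _ := PresentedGroup (raagRels G)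

noncomputable instance {V : Type*} (G : SimpleGraph V) : Group (RAAG G) :=
  inferInstanceAs (Group (PresentedGroup (raagRels G)))

/-- The join of two simple graphs: the disjoint union of the two graphs, with every
vertex of the first adjacent to every vertex of the second. -/
def SimpleGraph.graphJoin {V₁ V₂ : Type*} (G₁ : SimpleGraph V₁) (G₂ : SimpleGraph V₂) :
    SimpleGraph (V₁ ⊕ V₂) where
  Adj x y :=
    match x, y with
    | .inl a, .inl b => G₁.Adj a b
    | .inr a, .inr b => G₂.Adj a b
    | .inl _, .inr _ => True
    | .inr _, .inl _ => True
  symm := by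
    constructor
    rintro (a | a) (b | b) h
    · exact h.symm
    · trivial
    · trivial
    · exact h.symm
  loopless := by
    constructor
    rintro (a | a) h
    · exact G₁.irrefl h
    · exact G₂.irrefl h

section ZFree

/-- abstract "virtually ℤ^{≤ i}" predicate -/
def VZ (G : Type*) [Group G] (i : ℕ) : Prop :=
  ∃ H : Subgroup G, H.FiniteIndex ∧ ∃ n : ℕ, n ≤ i ∧ Nonempty (H ≃* Multiplicative (Fin n → ℤ))

lemma VZ_mono {G : Type*} [Group G] {i j : ℕ} (h : i ≤ j) : VZ G i → VZ G j := by
  rintro ⟨H, h1, n, h2, h3⟩; exact ⟨H, h1, n, h2.trans h, h3⟩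

lemma subgroup_multPi_free {n : ℕ} (S : Subgroup (Multiplicative (Fin n → ℤ))) :
    ∃ k : ℕ, k ≤ n ∧ Nonempty (S ≃* Multiplicative (Fin k → ℤ)) := by
  set T : AddSubgroup (Fin n → ℤ) := Subgroup.toAddSubgroup' S with hT
  set N : Submodule ℤ (Fin n → ℤ) := AddSubgroup.toIntSubmodule T with hN
  obtain ⟨k, b⟩ := Submodule.basisOfPid (Pi.basisFun ℤ (Fin n)) N
  have hk : k = Module.finrank ℤ N := by
    simpa using (Module.finrank_eq_card_basis b).symm
  refine ⟨k, ?_, ?_⟩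
  · rw [hk]
    have := Submodule.finrank_le N
    simpa [Module.finrank_pi] using this
  · have e1 : S ≃* Multiplicative T :=
      { toFun := fun x => Multiplicative.ofAdd (⟨Multiplicative.toAdd x.1, x.2⟩ : T)
        invFun := fun x => ⟨Multiplicative.ofAdd (Multiplicative.toAdd x).1, (Multiplicative.toAdd x).2⟩
        left_inv := fun x => rfl
        right_inv := fun x => rfl
        map_mul' := fun x y => rfl }
    have e2 : T ≃+ N :=
      { toFun := fun x => ⟨x.1, x.2⟩
        invFun := fun x => ⟨x.1, x.2⟩
        left_inv := fun x => rfl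
        right_inv := fun x => rfl
        map_add' := fun x y => rfl }
    exact ⟨e1.trans ((e2.trans b.equivFun.toAddEquiv).toMultiplicative)⟩

lemma multPi_le_of_injective {a b : ℕ}
    (φ : Multiplicative (Fin a → ℤ) →* Multiplicative (Fin b → ℤ))
    (hφ : Function.Injective φ) : a ≤ b := by
  let ψ := (AddMonoidHom.toMultiplicative.symm φ).toIntLinearMap
  have hψ : Function.Injective ψ := hφ
  have := LinearMap.finrank_le_finrank_of_injective hψ
  simpa [Module.finrank_pi] using this

/-- `ℤ^a × ℤ^b ≃ ℤ^(a+b)` multiplicatively. -/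
noncomputable def multPiProd (a b : ℕ) :
    (Multiplicative (Fin a → ℤ) × Multiplicative (Fin b → ℤ)) ≃* Multiplicative (Fin (a+b) → ℤ) := by
  have e0 : (Fin (a+b) → ℤ) ≃+ (Fin a → ℤ) × (Fin b → ℤ) :=
    { toFun := fun f => (fun i => f (Fin.castAdd b i), fun j => f (Fin.natAdd a j))
      invFun := fun p => Fin.addCases p.1 p.2
      left_inv := by
        intro f; funext i
        refine Fin.addCases (fun i => ?_) (fun j => ?_) i <;> simp
      right_inv := by
        intro p; ext i <;> simp
      map_add' := fun x y => rfl }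
  have e1 : Multiplicative ((Fin a → ℤ) × (Fin b → ℤ)) ≃*
      Multiplicative (Fin a → ℤ) × Multiplicative (Fin b → ℤ) :=
    { toFun := fun z => (Multiplicative.ofAdd (Multiplicative.toAdd z).1,
        Multiplicative.ofAdd (Multiplicative.toAdd z).2)
      invFun := fun p => Multiplicative.ofAdd (Multiplicative.toAdd p.1, Multiplicative.toAdd p.2)
      left_inv := fun x => rfl
      right_inv := fun x => rfl
      map_mul' := fun x y => rfl }
  exact (e1.symm.trans (AddEquiv.toMultiplicative e0.symm))

end ZFree

section VZtransfer
variable {G G' M : Type*} [Group G] [Group G'] [Group M]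

lemma index_map_equiv (e : G ≃* G') (H : Subgroup G) :
    (H.map e.toMonoidHom).index = H.index := by
  rw [Subgroup.map_equiv_eq_comap_symm']
  exact Subgroup.index_comap_of_surjective _ e.symm.surjective

lemma VZ_congr (e : G ≃* G') {i : ℕ} (h : VZ G i) : VZ G' i := by
  obtain ⟨H, h1, n, h2, ⟨f⟩⟩ := h
  refine ⟨H.map e.toMonoidHom, ⟨?_⟩, n, h2, ⟨((e.subgroupMap H).symm.trans f)⟩⟩
  rw [index_map_equiv]; exact h1.1

lemma VZ_of_le {L : Subgroup M} (hL : L.FiniteIndex) {i : ℕ} (h : VZ L i) : VZ M i := by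
  obtain ⟨H, h1, n, h2, ⟨f⟩⟩ := h
  refine ⟨H.map L.subtype, ⟨?_⟩, n, h2,
    ⟨((Subgroup.equivMapOfInjective H L.subtype L.subtype_injective).symm.trans f)⟩⟩
  have hle : H.map L.subtype ≤ L := Subgroup.map_subtype_le H
  have := Subgroup.relIndex_mul_index hle
  have hrel : (H.map L.subtype).relIndex L = H.index := by
    rw [Subgroup.relIndex]
    congr 1
    exact Subgroup.comap_map_eq_self_of_injective L.subtype_injective H
  intro hz
  rw [← this, hrel] at hz
  rcases Nat.mul_eq_zero.mp hz with h' | h'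
  · exact h1.1 h'
  · exact hL.1 h'

end VZtransfer

section VZprod
variable {G G' : Type*} [Group G] [Group G']

lemma VZ_prod {k l : ℕ} (h1 : VZ G k) (h2 : VZ G' l) : VZ (G × G') (k + l) := by
  obtain ⟨H1, hf1, n1, hn1, ⟨e1⟩⟩ := h1
  obtain ⟨H2, hf2, n2, hn2, ⟨e2⟩⟩ := h2
  refine ⟨H1.prod H2, ⟨?_⟩, n1 + n2, Nat.add_le_add hn1 hn2,
    ⟨((H1.prodEquiv H2).trans (e1.prodCongr e2)).trans (multPiProd n1 n2)⟩⟩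
  rw [Subgroup.index_prod]
  exact Nat.mul_ne_zero hf1.1 hf2.1

lemma finiteIndex_comap_inl (H : Subgroup (G × G')) [H.FiniteIndex] :
    (H.comap (MonoidHom.inl G G')).FiniteIndex := by
  constructor
  rw [Subgroup.index_comap]
  exact (Subgroup.instFiniteIndex_subgroupOf H (MonoidHom.inl G G').range).1

lemma finiteIndex_comap_inr (H : Subgroup (G × G')) [H.FiniteIndex] :
    (H.comap (MonoidHom.inr G G')).FiniteIndex := by
  constructor
  rw [Subgroup.index_comap]
  exact (Subgroup.instFiniteIndex_subgroupOf H (MonoidHom.inr G G').range).1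

lemma VZ_prod_inv {m : ℕ} (h : VZ (G × G') m) :
    ∃ k l : ℕ, k + l ≤ m ∧ VZ G k ∧ VZ G' l := by
  obtain ⟨H, hf, n, hn, ⟨e⟩⟩ := h
  haveI := hf
  -- maps from the two "axis" subgroups into H
  let ι₁ : (H.comap (MonoidHom.inl G G')) →* H :=
    { toFun := fun x => ⟨(x.1, 1), x.2⟩
      map_one' := rfl
      map_mul' := fun x y => by
        ext <;> simp }
  let ι₂ : (H.comap (MonoidHom.inr G G')) →* H :=
    { toFun := fun x => ⟨(1, x.1), x.2⟩
      map_one' := rfl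
      map_mul' := fun x y => by
        ext <;> simp }
  have hι₁ : Function.Injective ι₁ := by
    intro x y hxy
    ext
    exact congrArg (fun z => (z : G × G').1) (congrArg Subtype.val hxy)
  have hι₂ : Function.Injective ι₂ := by
    intro x y hxy
    ext
    exact congrArg (fun z => (z : G × G').2) (congrArg Subtype.val hxy)
  obtain ⟨k, hk, ⟨ek⟩⟩ := subgroup_multPi_free (e.toMonoidHom.comp ι₁).range
  obtain ⟨l, hl, ⟨el⟩⟩ := subgroup_multPi_free (e.toMonoidHom.comp ι₂).range
  have eH1 := (MonoidHom.ofInjective (f := e.toMonoidHom.comp ι₁)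
      (e.injective.comp hι₁)).trans ek
  have eH2 := (MonoidHom.ofInjective (f := e.toMonoidHom.comp ι₂)
      (e.injective.comp hι₂)).trans el
  -- k + l ≤ n
  have hkl : k + l ≤ n := by
    let j : (H.comap (MonoidHom.inl G G')) × (H.comap (MonoidHom.inr G G')) →* H :=
      { toFun := fun p => ⟨(p.1.1, p.2.1), by simpa using mul_mem (Subgroup.mem_comap.mp p.1.2) (Subgroup.mem_comap.mp p.2.2)⟩
        map_one' := rfl
        map_mul' := fun x y => by ext <;> simp }
    have hj : Function.Injective j := by
      rintro ⟨x1, x2⟩ ⟨y1, y2⟩ hxy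
      exact Prod.ext (Subtype.ext (congrArg (Prod.fst ∘ Subtype.val) hxy))
        (Subtype.ext (congrArg (Prod.snd ∘ Subtype.val) hxy))
    let φ := ((e.toMonoidHom.comp j).comp
        ((eH1.symm.prodCongr eH2.symm).toMonoidHom)).comp (multPiProd k l).symm.toMonoidHom
    have hφ : Function.Injective φ := by
      intro x y hxy
      simp only [φ, MonoidHom.coe_comp, Function.comp_apply, MulEquiv.coe_toMonoidHom] at hxy
      exact (multPiProd k l).symm.injective
        ((eH1.symm.prodCongr eH2.symm).injective (hj (e.injective hxy)))
    exact multPi_le_of_injective φ hφ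
  exact ⟨k, l, hkl.trans hn,
    ⟨_, finiteIndex_comap_inl H, k, le_rfl, ⟨eH1⟩⟩,
    ⟨_, finiteIndex_comap_inr H, l, le_rfl, ⟨eH2⟩⟩⟩

end VZprod

section AlgA
variable {G G' : Type*} [Group G] [Group G']

lemma mem_algA_iff {g : G} {i : ℕ} :
    g ∈ algA G i ↔ VZ (Subgroup.centralizer ({g} : Set G)) i := Iff.rfl

lemma algA_mono {i j : ℕ} (h : i ≤ j) : algA G i ⊆ algA G j := fun _ hg =>
  (mem_algA_iff).mpr (VZ_mono h ((mem_algA_iff).mp hg))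

lemma centralizer_prod (a : G) (b : G') :
    Subgroup.centralizer ({(a, b)} : Set (G × G')) =
      (Subgroup.centralizer {a}).prod (Subgroup.centralizer {b}) := by
  ext x
  simp only [Subgroup.mem_centralizer_iff, Set.mem_singleton_iff, forall_eq,
    Subgroup.mem_prod, Prod.ext_iff, Prod.fst_mul, Prod.snd_mul]
  constructor
  · intro h
    exact h (a, b) ⟨rfl, rfl⟩
  · rintro ⟨h1, h2⟩ ⟨pa, pb⟩ ⟨hpa, hpb⟩
    subst hpa
    subst hpb
    exact ⟨h1, h2⟩

noncomputable def centralizerProdEquiv (a : G) (b : G') :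
    (Subgroup.centralizer ({(a, b)} : Set (G × G'))) ≃*
      (Subgroup.centralizer ({a} : Set G)) × (Subgroup.centralizer ({b} : Set G')) :=
  (MulEquiv.subgroupCongr (centralizer_prod a b)).trans (Subgroup.prodEquiv _ _)

lemma mem_algA_prod {p : G × G'} {i : ℕ} :
    p ∈ algA (G × G') i ↔ ∃ k l : ℕ, k + l ≤ i ∧ p.1 ∈ algA G k ∧ p.2 ∈ algA G' l := by
  obtain ⟨a, b⟩ := p
  rw [mem_algA_iff]
  constructor
  · intro h
    exact VZ_prod_inv (VZ_congr (centralizerProdEquiv a b) h)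
  · rintro ⟨k, l, hkl, h1, h2⟩
    exact VZ_mono hkl (VZ_congr (centralizerProdEquiv a b).symm (VZ_prod h1 h2))

lemma centralizer_map (e : G ≃* G') (g : G) :
    (Subgroup.centralizer ({g} : Set G)).map e.toMonoidHom =
      Subgroup.centralizer ({e g} : Set G') := by
  ext x
  constructor
  · rintro ⟨y, hy, rfl⟩
    simp only [SetLike.mem_coe, Subgroup.mem_centralizer_iff, Set.mem_singleton_iff,
      forall_eq] at hy ⊢
    simpa [← map_mul] using congrArg e hy
  · intro hx
    obtain ⟨y, rfl⟩ := e.surjective x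
    refine ⟨y, ?_, rfl⟩
    simp only [Subgroup.mem_centralizer_iff, Set.mem_singleton_iff, forall_eq] at hx
    simp only [SetLike.mem_coe, Subgroup.mem_centralizer_iff, Set.mem_singleton_iff, forall_eq]
    rw [← map_mul, ← map_mul] at hx
    exact e.injective hx

lemma algA_image (e : G ≃* G') {i : ℕ} {g : G} (h : g ∈ algA G i) : e g ∈ algA G' i := by
  rw [mem_algA_iff] at h ⊢
  exact VZ_congr ((e.subgroupMap _).trans (MulEquiv.subgroupCongr (centralizer_map e g))) h

end AlgA

section Covers
variable {G G' : Type*} [Group G] [Group G']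

lemma algCovers_iff {i : ℕ} :
    algCovers G i ↔ ∃ F : Finset G, ∀ x : G, ∃ g ∈ F, g⁻¹ * x ∈ algA G i := by
  unfold algCovers
  constructor
  · rintro ⟨F, hF⟩
    refine ⟨F, fun x => ?_⟩
    have : x ∈ (⋃ g ∈ F, g • algA G i) := hF ▸ Set.mem_univ x
    simpa [Set.mem_iUnion, Set.mem_smul_set_iff_inv_smul_mem, smul_eq_mul] using this
  · rintro ⟨F, hF⟩
    refine ⟨F, Set.eq_univ_of_forall fun x => ?_⟩
    obtain ⟨g, hg, h⟩ := hF x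
    exact Set.mem_biUnion hg (by simpa [Set.mem_smul_set_iff_inv_smul_mem, smul_eq_mul] using h)

lemma algCovers_mono {i j : ℕ} (h : i ≤ j) (hc : algCovers G i) : algCovers G j := by
  rw [algCovers_iff] at hc ⊢
  obtain ⟨F, hF⟩ := hc
  exact ⟨F, fun x => by obtain ⟨g, hg, hm⟩ := hF x; exact ⟨g, hg, algA_mono h hm⟩⟩

lemma algCovers_congr (e : G ≃* G') {i : ℕ} (h : algCovers G i) : algCovers G' i := by
  classical
  rw [algCovers_iff] at h ⊢
  obtain ⟨F, hF⟩ := h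
  refine ⟨F.image e, fun x => ?_⟩
  obtain ⟨g, hg, hm⟩ := hF (e.symm x)
  refine ⟨e g, Finset.mem_image_of_mem e hg, ?_⟩
  have := algA_image e hm
  simpa [map_mul] using this

lemma algCovers_prod {p q : ℕ} (h1 : algCovers G p) (h2 : algCovers G' q) :
    algCovers (G × G') (p + q) := by
  classical
  rw [algCovers_iff] at h1 h2 ⊢
  obtain ⟨F1, hF1⟩ := h1
  obtain ⟨F2, hF2⟩ := h2
  refine ⟨F1 ×ˢ F2, fun x => ?_⟩
  obtain ⟨g, hg, hmg⟩ := hF1 x.1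
  obtain ⟨h, hh, hmh⟩ := hF2 x.2
  exact ⟨(g, h), Finset.mem_product.mpr ⟨hg, hh⟩,
    mem_algA_prod.mpr ⟨p, q, le_rfl, hmg, hmh⟩⟩

lemma algCovers_proj_left {i : ℕ} (h : algCovers (G × G') i) : algCovers G i := by
  classical
  rw [algCovers_iff] at h ⊢
  obtain ⟨F, hF⟩ := h
  refine ⟨F.image Prod.fst, fun a => ?_⟩
  obtain ⟨⟨g, g'⟩, hg, hm⟩ := hF (a, 1)
  obtain ⟨k, l, hkl, h1, _⟩ := mem_algA_prod.mp hm
  exact ⟨g, Finset.mem_image_of_mem Prod.fst hg, algA_mono (by omega) h1⟩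

lemma algCovers_proj_right {i : ℕ} (h : algCovers (G × G') i) : algCovers G' i := by
  classical
  rw [algCovers_iff] at h ⊢
  obtain ⟨F, hF⟩ := h
  refine ⟨F.image Prod.snd, fun b => ?_⟩
  obtain ⟨⟨g, g'⟩, hg, hm⟩ := hF (1, b)
  obtain ⟨k, l, hkl, _, h2⟩ := mem_algA_prod.mp hm
  exact ⟨g', Finset.mem_image_of_mem Prod.snd hg, algA_mono (by omega) h2⟩

lemma algCovers_prod_key {i j : ℕ} (h : algCovers (G × G') i) (hb : ¬ algCovers G' j) :
    algCovers G (i - (j + 1)) := by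
  classical
  rw [algCovers_iff] at h ⊢
  obtain ⟨F, hF⟩ := h
  refine ⟨F.image Prod.fst, fun a => ?_⟩
  by_contra hcon
  push_neg at hcon
  apply hb
  rw [algCovers_iff]
  refine ⟨F.image Prod.snd, fun b => ?_⟩
  obtain ⟨⟨g, g'⟩, hg, hm⟩ := hF (a, b)
  obtain ⟨k, l, hkl, h1, h2⟩ := mem_algA_prod.mp hm
  have hknot : ¬ (k ≤ i - (j + 1)) := fun hk =>
    hcon g (Finset.mem_image_of_mem Prod.fst hg) (algA_mono hk h1)
  have hlj : l ≤ j := by omega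
  exact ⟨g', Finset.mem_image_of_mem Prod.snd hg, algA_mono hlj h2⟩

end Covers

-- ## finite index transfer
section FI
variable {G : Type*} [Group G]

lemma algA_coe {K : Subgroup G} (hK : K.FiniteIndex) {i : ℕ} {k : ↥K}
    (h : k ∈ algA ↥K i) : (k : G) ∈ algA G i := by
  rw [mem_algA_iff] at h ⊢
  set D := Subgroup.centralizer ({(k : G)} : Set G) with hD
  set L := (Subgroup.centralizer ({k} : Set ↥K)).map K.subtype with hLdef
  have hLD : L ≤ D := by
    rintro x ⟨y, hy, rfl⟩
    simp only [SetLike.mem_coe, Subgroup.mem_centralizer_iff, Set.mem_singleton_iff,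
      forall_eq] at hy ⊢
    rw [hD, Subgroup.mem_centralizer_iff]
    intro h' hh'
    rw [Set.mem_singleton_iff] at hh'
    rw [hh']
    exact Subtype.ext_iff.mp hy
  have hL : L = D ⊓ K := by
    ext x
    constructor
    · intro hx
      exact ⟨hLD hx, Subgroup.map_subtype_le _ hx⟩
    · rintro ⟨hxD, hxK⟩
      refine ⟨⟨x, hxK⟩, ?_, rfl⟩
      have hxD' : x ∈ D := hxD
      rw [hD, Subgroup.mem_centralizer_iff] at hxD'
      rw [SetLike.mem_coe, Subgroup.mem_centralizer_iff]
      intro h' hh'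
      rw [Set.mem_singleton_iff] at hh'
      rw [hh']
      exact Subtype.ext (hxD' (k : G) rfl)
  haveI : K.FiniteIndex := hK
  have hsub : L.subgroupOf D = K.subgroupOf D := by
    ext x
    simp only [Subgroup.mem_subgroupOf, hL, Subgroup.mem_inf]
    exact ⟨fun h' => h'.2, fun h' => ⟨x.2, h'⟩⟩
  have hfi : (L.subgroupOf D).FiniteIndex := by
    rw [hsub]; exact Subgroup.instFiniteIndex_subgroupOf K D
  have e1 : (Subgroup.centralizer ({k} : Set ↥K)) ≃* L :=
    Subgroup.equivMapOfInjective _ K.subtype K.subtype_injective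
  have e2 : (L.subgroupOf D) ≃* L := Subgroup.subgroupOfEquivOfLe hLD
  exact VZ_of_le hfi (VZ_congr (e1.trans e2.symm) h)

lemma algCovers_of_finiteIndex {K : Subgroup G} (hK : K.FiniteIndex) {i : ℕ}
    (h : algCovers ↥K i) : algCovers G i := by
  classical
  rw [algCovers_iff] at h ⊢
  obtain ⟨F, hF⟩ := h
  haveI : K.FiniteIndex := hK
  haveI : Fintype (G ⧸ K) := Fintype.ofFinite _
  refine ⟨(Finset.univ ×ˢ F).image
    (fun p : (G ⧸ K) × ↥K => Quotient.out p.1 * (p.2 : G)), fun x => ?_⟩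
  set t : G := Quotient.out (QuotientGroup.mk x : G ⧸ K) with htdef
  have ht : t⁻¹ * x ∈ K := QuotientGroup.eq.mp (QuotientGroup.out_eq' (QuotientGroup.mk x))
  obtain ⟨g, hg, hm⟩ := hF ⟨t⁻¹ * x, ht⟩
  refine ⟨t * (g : G), Finset.mem_image.mpr ⟨(QuotientGroup.mk x, g), by simp [hg], rfl⟩, ?_⟩
  have hco := algA_coe hK hm
  have heq : (t * (g : G))⁻¹ * x = ((g⁻¹ * ⟨t⁻¹ * x, ht⟩ : ↥K) : G) := by
    push_cast
    group
  rw [heq]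
  exact hco

lemma algr_le_of_finiteIndex' {K : Subgroup G} (hK : K.FiniteIndex)
    (h : ∀ {i : ℕ}, algCovers ↥K i → algCovers G i)
    (hle : ∀ {i : ℕ}, algCovers G i → algr G ≤ (i : ℕ∞)) : algr G ≤ algr ↥K := by
  show algr G ≤ sInf {n : ℕ∞ | ∃ i : ℕ, n = (i : ℕ∞) ∧ algCovers ↥K i}
  refine le_sInf ?_
  rintro x ⟨j, rfl, hj⟩
  exact hle (h hj)
end FI

-- ## algr API
section Algr
variable {G G' : Type*} [Group G] [Group G']

lemma algr_le_iff {i : ℕ} : algr G ≤ (i : ℕ∞) ↔ algCovers G i := by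
  constructor
  · intro h
    by_contra hc
    have hall : ∀ x ∈ {n : ℕ∞ | ∃ j : ℕ, n = (j : ℕ∞) ∧ algCovers G j}, ((i : ℕ∞) + 1) ≤ x := by
      rintro x ⟨j, rfl, hj⟩
      have hij : ¬ j ≤ i := fun hji => hc (algCovers_mono hji hj)
      have : i + 1 ≤ j := by omega
      exact_mod_cast this
    have h2 := le_sInf hall
    have h3 : ((i : ℕ∞) + 1) ≤ (i : ℕ∞) := le_trans h2 h
    have h4 : (i + 1 : ℕ) ≤ i := by exact_mod_cast h3
    omega
  · intro h
    exact sInf_le ⟨i, rfl, h⟩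

lemma le_algr {m : ℕ∞} (h : ∀ j : ℕ, algCovers G j → m ≤ (j : ℕ∞)) : m ≤ algr G :=
  le_sInf (by rintro x ⟨j, rfl, hj⟩; exact h j hj)

lemma algr_eq_top_iff : algr G = ⊤ ↔ ∀ i : ℕ, ¬ algCovers G i := by
  constructor
  · intro h i hc
    have := algr_le_iff.mpr hc
    rw [h] at this
    exact (WithTop.coe_lt_top i).not_ge (by exact_mod_cast this)
  · intro h
    refine le_antisymm le_top (le_algr fun j hj => absurd hj (h j))

lemma algr_congr (e : G ≃* G') : algr G = algr G' := by
  unfold algr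
  congr 1
  ext n
  constructor
  · rintro ⟨i, rfl, h⟩; exact ⟨i, rfl, algCovers_congr e h⟩
  · rintro ⟨i, rfl, h⟩; exact ⟨i, rfl, algCovers_congr e.symm h⟩

lemma algr_prod : algr (G × G') = algr G + algr G' := by
  rcases eq_or_ne (algr G) ⊤ with hA | hA
  · rw [hA, top_add]
    rw [algr_eq_top_iff] at hA ⊢
    exact fun i hc => hA i (algCovers_proj_left hc)
  rcases eq_or_ne (algr G') ⊤ with hB | hB
  · rw [hB, add_top]
    rw [algr_eq_top_iff] at hB ⊢
    exact fun i hc => hB i (algCovers_proj_right hc)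
  obtain ⟨p, hp⟩ : ∃ p : ℕ, algr G = (p : ℕ∞) := by
    lift (algr G) to ℕ using hA with p hp; exact ⟨p, rfl⟩
  obtain ⟨q, hq⟩ : ∃ q : ℕ, algr G' = (q : ℕ∞) := by
    lift (algr G') to ℕ using hB with q hq; exact ⟨q, rfl⟩
  have hcovp : algCovers G p := algr_le_iff.mp (le_of_eq hp)
  have hcovq : algCovers G' q := algr_le_iff.mp (le_of_eq hq)
  apply le_antisymm
  · rw [hp, hq, ← Nat.cast_add]
    exact algr_le_iff.mpr (algCovers_prod hcovp hcovq)
  · rw [hp, hq]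
    apply le_algr
    intro j hj
    have hqj : q ≤ j := by
      have := algr_le_iff.mpr (algCovers_proj_right hj)
      rw [hq] at this
      exact_mod_cast this
    rcases Nat.eq_zero_or_pos q with h0 | hpos
    · have hpj : p ≤ j := by
        have := algr_le_iff.mpr (algCovers_proj_left hj)
        rw [hp] at this
        exact_mod_cast this
      have : p + q ≤ j := by omega
      exact_mod_cast this
    · have hnc : ¬ algCovers G' (q - 1) := by
        intro hc
        have := algr_le_iff.mpr hc
        rw [hq] at this
        have : q ≤ q - 1 := by exact_mod_cast this
        omega
      have hkey := algCovers_prod_key hj hnc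
      have hq1 : q - 1 + 1 = q := by omega
      rw [hq1] at hkey
      have hpj : p ≤ j - q := by
        have := algr_le_iff.mpr hkey
        rw [hp] at this
        exact_mod_cast this
      have : p + q ≤ j := by omega
      exact_mod_cast this

end Algr

-- ## algRank API
section AlgRank
variable {G G' : Type*} [Group G] [Group G']

lemma algr_le_algRank : algr G ≤ algRank G := by
  have h : algr ↥(⊤ : Subgroup G) = algr G := algr_congr Subgroup.topEquiv
  rw [← h]
  exact le_iSup₂ (f := fun (H : Subgroup G) (_ : H.FiniteIndex) => algr ↥H) ⊤ inferInstance

lemma algRank_le_congr (e : G ≃* G') : algRank G ≤ algRank G' := by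
  apply iSup₂_le
  intro H hH
  have hfi : (H.map e.toMonoidHom).FiniteIndex := ⟨by rw [index_map_equiv]; exact hH.1⟩
  have heq : algr ↥H = algr ↥(H.map e.toMonoidHom) := algr_congr (e.subgroupMap H)
  rw [heq]
  exact le_iSup₂ (f := fun (K : Subgroup G') (_ : K.FiniteIndex) => algr ↥K) _ hfi

lemma algRank_congr (e : G ≃* G') : algRank G = algRank G' :=
  le_antisymm (algRank_le_congr e) (algRank_le_congr e.symm)

lemma algRank_prod : algRank (G × G') = algRank G + algRank G' := by
  have prod_fi : ∀ (K₁ : Subgroup G) (K₂ : Subgroup G'), K₁.FiniteIndex → K₂.FiniteIndex →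
      (K₁.prod K₂).FiniteIndex := fun K₁ K₂ h1 h2 =>
    ⟨by rw [Subgroup.index_prod]; exact Nat.mul_ne_zero h1.1 h2.1⟩
  have algr_prodsub : ∀ (K₁ : Subgroup G) (K₂ : Subgroup G'),
      algr ↥(K₁.prod K₂) = algr ↥K₁ + algr ↥K₂ := by
    intro K₁ K₂
    rw [algr_congr (K₁.prodEquiv K₂), algr_prod]
  apply le_antisymm
  · apply iSup₂_le
    intro H hH
    haveI : H.FiniteIndex := hH
    set K₁ := H.comap (MonoidHom.inl G G') with hK₁
    set K₂ := H.comap (MonoidHom.inr G G') with hK₂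
    haveI h1 : K₁.FiniteIndex := finiteIndex_comap_inl H
    haveI h2 : K₂.FiniteIndex := finiteIndex_comap_inr H
    have hle : K₁.prod K₂ ≤ H := by
      rintro ⟨a, b⟩ ⟨ha, hb⟩
      have : ((a, 1) : G × G') * (1, b) ∈ H := mul_mem ha hb
      simpa using this
    have hfi : ((K₁.prod K₂).subgroupOf H).FiniteIndex := by
      haveI := prod_fi K₁ K₂ h1 h2
      exact Subgroup.instFiniteIndex_subgroupOf _ _
    calc algr ↥H ≤ algr ↥((K₁.prod K₂).subgroupOf H) :=
          algr_le_of_finiteIndex' hfi (fun {i} hc => algCovers_of_finiteIndex hfi hc)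
            (fun {i} hc => algr_le_iff.mpr hc)
      _ = algr ↥(K₁.prod K₂) := algr_congr (Subgroup.subgroupOfEquivOfLe hle)
      _ = algr ↥K₁ + algr ↥K₂ := algr_prodsub K₁ K₂
      _ ≤ algRank G + algRank G' := add_le_add
          (le_iSup₂ (f := fun (K : Subgroup G) (_ : K.FiniteIndex) => algr ↥K) _ h1)
          (le_iSup₂ (f := fun (K : Subgroup G') (_ : K.FiniteIndex) => algr ↥K) _ h2)
  · refine ENat.biSup_add_biSup_le' (f := fun H : Subgroup G => algr ↥H)
      (g := fun H : Subgroup G' => algr ↥H)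
      (p := fun H : Subgroup G => H.FiniteIndex) (q := fun H : Subgroup G' => H.FiniteIndex)
      ⟨⊤, by infer_instance⟩ ⟨⊤, by infer_instance⟩ ?_
    intro K₁ h1 K₂ h2
    rw [← algr_prodsub K₁ K₂]
    exact le_iSup₂ (f := fun (K : Subgroup (G × G')) (_ : K.FiniteIndex) => algr ↥K) _
      (prod_fi K₁ K₂ h1 h2)

end AlgRank

section RAAG
variable {V : Type*} {Γ : SimpleGraph V}

lemma raag_commute {u v : V} (h : Γ.Adj u v) :
    Commute (PresentedGroup.of (rels := raagRels Γ) u) (PresentedGroup.of v) := by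
  rw [← commutatorElement_eq_one_iff_commute, commutatorElement_def]
  have hmem : (FreeGroup.of u * FreeGroup.of v * (FreeGroup.of u)⁻¹ * (FreeGroup.of v)⁻¹)
      ∈ Subgroup.normalClosure (raagRels Γ) :=
    Subgroup.subset_normalClosure ⟨u, v, h, rfl⟩
  have h1 : (PresentedGroup.mk (raagRels Γ))
      (FreeGroup.of u * FreeGroup.of v * (FreeGroup.of u)⁻¹ * (FreeGroup.of v)⁻¹) = 1 :=
    (QuotientGroup.eq_one_iff _).mpr hmem
  simpa [map_mul, map_inv, PresentedGroup.of] using h1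

/-- the exponent-sum homomorphism to `ℤ`. -/
noncomputable def raagDeg (Γ : SimpleGraph V) :
    PresentedGroup (raagRels Γ) →* Multiplicative ℤ :=
  PresentedGroup.toGroup (f := fun _ => Multiplicative.ofAdd (1 : ℤ)) (by
    rintro r ⟨u, v, hadj, rfl⟩
    simp only [map_mul, map_inv, FreeGroup.lift_apply_of]
    group)

lemma raagDeg_of (x : V) : raagDeg Γ (PresentedGroup.of x) = Multiplicative.ofAdd (1 : ℤ) :=
  PresentedGroup.toGroup.of _

lemma mem_algA_zero_deg_eq_one {x : PresentedGroup (raagRels Γ)}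
    (hx : x ∈ algA (PresentedGroup (raagRels Γ)) 0) : raagDeg Γ x = 1 := by
  obtain ⟨H, hfi, n, hn, ⟨e⟩⟩ := hx
  interval_cases n
  -- H is trivial, hence the centralizer is finite
  have hsub : Subsingleton H :=
    ⟨fun a b => e.injective (Subsingleton.elim _ _)⟩
  haveI := hsub
  haveI : Finite H := Finite.of_subsingleton
  haveI := hfi
  have hC : Finite (Subgroup.centralizer ({x} : Set (PresentedGroup (raagRels Γ)))) :=
    Finite.of_equiv _ (Subgroup.groupEquivQuotientProdSubgroup (s := H)).symm
  -- x lies in its own centralizer, hence has finite order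
  have hmem : x ∈ Subgroup.centralizer ({x} : Set (PresentedGroup (raagRels Γ))) := by
    rw [Subgroup.mem_centralizer_iff]
    rintro y hy
    rw [Set.mem_singleton_iff] at hy
    rw [hy]
  set y : (Subgroup.centralizer ({x} : Set (PresentedGroup (raagRels Γ)))) := ⟨x, hmem⟩ with hy
  haveI := hC
  have hk : orderOf y ≠ 0 := (orderOf_pos y).ne'
  have hxk : x ^ orderOf y = 1 := by
    have h1 := pow_orderOf_eq_one y
    have h2 := congrArg (Subtype.val) h1
    simpa only [SubgroupClass.coe_pow, OneMemClass.coe_one] using h2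
  have hdeg : (raagDeg Γ x) ^ orderOf y = 1 := by
    rw [← map_pow, hxk, map_one]
  have ha : (orderOf y : ℤ) * Multiplicative.toAdd (raagDeg Γ x) = 0 := by
    have h3 := congrArg Multiplicative.toAdd hdeg
    simpa [toAdd_pow, nsmul_eq_mul] using h3
  have hz : Multiplicative.toAdd (raagDeg Γ x) = 0 := by
    rcases mul_eq_zero.mp ha with h' | h'
    · exact absurd (by exact_mod_cast h') hk
    · exact h'
  calc raagDeg Γ x = Multiplicative.ofAdd (Multiplicative.toAdd (raagDeg Γ x)) := rfl
    _ = Multiplicative.ofAdd 0 := by rw [hz]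
    _ = 1 := rfl

lemma raag_not_covers_zero [Nonempty V] (Γ : SimpleGraph V) :
    ¬ algCovers (PresentedGroup (raagRels Γ)) 0 := by
  classical
  intro hc
  rw [algCovers_iff] at hc
  obtain ⟨F, hF⟩ := hc
  set v : PresentedGroup (raagRels Γ) := PresentedGroup.of (Classical.arbitrary V) with hv
  choose g hgF hg using fun n : ℕ => hF (v ^ n)
  have hφ : ∀ n : ℕ, raagDeg Γ (g n) = Multiplicative.ofAdd (n : ℤ) := by
    intro n
    have h1 := mem_algA_zero_deg_eq_one (hg n)
    rw [map_mul, map_inv, inv_mul_eq_one] at h1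
    rw [h1, map_pow, raagDeg_of]
    have : Multiplicative.toAdd ((Multiplicative.ofAdd (1:ℤ)) ^ n) = (n : ℤ) := by
      simp [toAdd_pow]
    calc (Multiplicative.ofAdd (1:ℤ)) ^ n
        = Multiplicative.ofAdd (Multiplicative.toAdd ((Multiplicative.ofAdd (1:ℤ)) ^ n)) := rfl
      _ = Multiplicative.ofAdd (n : ℤ) := by rw [this]
  have hmaps : ∀ n ∈ Finset.range (F.card + 1), g n ∈ F := fun n _ => hgF n
  obtain ⟨n₁, hn₁, n₂, hn₂, hne, heq⟩ :=
    Finset.exists_ne_map_eq_of_card_lt_of_maps_to (by simp) hmaps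
  apply hne
  have h4 : Multiplicative.ofAdd (n₁ : ℤ) = Multiplicative.ofAdd (n₂ : ℤ) := by
    rw [← hφ n₁, ← hφ n₂, heq]
  have h5 : (n₁ : ℤ) = (n₂ : ℤ) := congrArg Multiplicative.toAdd h4
  exact_mod_cast h5

lemma one_le_algRank_raag [Nonempty V] (Γ : SimpleGraph V) :
    1 ≤ algRank (PresentedGroup (raagRels Γ)) := by
  refine le_trans ?_ algr_le_algRank
  apply le_algr
  intro j hj
  cases j with
  | zero => exact absurd hj (raag_not_covers_zero Γ)
  | succ n =>
      have : (1 : ℕ) ≤ n + 1 := Nat.succ_le_succ (Nat.zero_le n)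
      exact_mod_cast this

end RAAG

section Join
variable {V₁ V₂ : Type*} (G₁ : SimpleGraph V₁) (G₂ : SimpleGraph V₂)

noncomputable def raagJoinHom :
    PresentedGroup (raagRels (G₁.graphJoin G₂)) →*
      PresentedGroup (raagRels G₁) × PresentedGroup (raagRels G₂) :=
  PresentedGroup.toGroup
    (f := Sum.elim (fun v => (PresentedGroup.of v, 1)) (fun w => (1, PresentedGroup.of w))) (by
    rintro r ⟨u, v, hadj, rfl⟩
    simp only [map_mul, map_inv, FreeGroup.lift_apply_of]
    rw [← commutatorElement_def, commutatorElement_eq_one_iff_commute]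
    rcases u with a | a <;> rcases v with b | b
    · exact Prod.ext (raag_commute (Γ := G₁) hadj) rfl
    · exact Prod.ext (by simp) (by simp)
    · exact Prod.ext (by simp) (by simp)
    · exact Prod.ext rfl (raag_commute (Γ := G₂) hadj))

@[simp] lemma raagJoinHom_of_inl (v : V₁) :
    raagJoinHom G₁ G₂ (PresentedGroup.of (Sum.inl v)) = (PresentedGroup.of v, 1) :=
  PresentedGroup.toGroup.of _

@[simp] lemma raagJoinHom_of_inr (w : V₂) :
    raagJoinHom G₁ G₂ (PresentedGroup.of (Sum.inr w)) = (1, PresentedGroup.of w) :=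
  PresentedGroup.toGroup.of _

noncomputable def raagInl :
    PresentedGroup (raagRels G₁) →* PresentedGroup (raagRels (G₁.graphJoin G₂)) :=
  PresentedGroup.toGroup (f := fun v => PresentedGroup.of (Sum.inl v)) (by
    rintro r ⟨u, v, hadj, rfl⟩
    simp only [map_mul, map_inv, FreeGroup.lift_apply_of]
    rw [← commutatorElement_def, commutatorElement_eq_one_iff_commute]
    exact raag_commute (show (G₁.graphJoin G₂).Adj (Sum.inl u) (Sum.inl v) from hadj))

noncomputable def raagInr :
    PresentedGroup (raagRels G₂) →* PresentedGroup (raagRels (G₁.graphJoin G₂)) :=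
  PresentedGroup.toGroup (f := fun v => PresentedGroup.of (Sum.inr v)) (by
    rintro r ⟨u, v, hadj, rfl⟩
    simp only [map_mul, map_inv, FreeGroup.lift_apply_of]
    rw [← commutatorElement_def, commutatorElement_eq_one_iff_commute]
    exact raag_commute (show (G₁.graphJoin G₂).Adj (Sum.inr u) (Sum.inr v) from hadj))

@[simp] lemma raagInl_of (v : V₁) :
    raagInl G₁ G₂ (PresentedGroup.of v) = PresentedGroup.of (Sum.inl v) :=
  PresentedGroup.toGroup.of _

@[simp] lemma raagInr_of (w : V₂) :
    raagInr G₁ G₂ (PresentedGroup.of w) = PresentedGroup.of (Sum.inr w) :=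
  PresentedGroup.toGroup.of _

lemma raagInl_inr_commute (a : PresentedGroup (raagRels G₁)) (b : PresentedGroup (raagRels G₂)) :
    Commute (raagInl G₁ G₂ a) (raagInr G₁ G₂ b) := by
  have step1 : ∀ (a : PresentedGroup (raagRels G₁)) (w : V₂),
      Commute (raagInl G₁ G₂ a)
        (PresentedGroup.of (rels := raagRels (G₁.graphJoin G₂)) (Sum.inr w)) := by
    intro a w
    have hmem : a ∈ Subgroup.comap (raagInl G₁ G₂)
        (Subgroup.centralizer
          {PresentedGroup.of (rels := raagRels (G₁.graphJoin G₂)) (Sum.inr w)}) := by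
      apply PresentedGroup.generated_by
      intro j
      rw [Subgroup.mem_comap, Subgroup.mem_centralizer_iff]
      intro h hh
      rw [Set.mem_singleton_iff] at hh
      rw [hh, raagInl_of]
      exact (raag_commute
        (show (G₁.graphJoin G₂).Adj (Sum.inl j) (Sum.inr w) from trivial)).symm
    rw [Subgroup.mem_comap, Subgroup.mem_centralizer_iff] at hmem
    exact Commute.symm (hmem _ rfl)
  have hmem : b ∈ Subgroup.comap (raagInr G₁ G₂)
      (Subgroup.centralizer {raagInl G₁ G₂ a}) := by
    apply PresentedGroup.generated_by
    intro j
    rw [Subgroup.mem_comap, Subgroup.mem_centralizer_iff]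
    intro h hh
    rw [Set.mem_singleton_iff] at hh
    rw [hh, raagInr_of]
    exact (step1 a j)
  rw [Subgroup.mem_comap, Subgroup.mem_centralizer_iff] at hmem
  exact hmem _ rfl

noncomputable def raagJoinInv :
    PresentedGroup (raagRels G₁) × PresentedGroup (raagRels G₂) →*
      PresentedGroup (raagRels (G₁.graphJoin G₂)) :=
  MonoidHom.noncommCoprod (raagInl G₁ G₂) (raagInr G₁ G₂) (raagInl_inr_commute G₁ G₂)

noncomputable def raagJoinEquiv :
    PresentedGroup (raagRels (G₁.graphJoin G₂)) ≃*
      PresentedGroup (raagRels G₁) × PresentedGroup (raagRels G₂) := by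
  have e1 : (raagJoinHom G₁ G₂).comp (raagInl G₁ G₂) =
      MonoidHom.inl (PresentedGroup (raagRels G₁)) (PresentedGroup (raagRels G₂)) := by
    apply PresentedGroup.ext
    intro x
    simp [MonoidHom.comp_apply]
  have e2 : (raagJoinHom G₁ G₂).comp (raagInr G₁ G₂) =
      MonoidHom.inr (PresentedGroup (raagRels G₁)) (PresentedGroup (raagRels G₂)) := by
    apply PresentedGroup.ext
    intro x
    simp [MonoidHom.comp_apply]
  refine MonoidHom.toMulEquiv (raagJoinHom G₁ G₂) (raagJoinInv G₁ G₂) ?_ ?_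
  · apply PresentedGroup.ext
    rintro (v | w)
    · simp [MonoidHom.comp_apply, raagJoinInv, MonoidHom.noncommCoprod_apply]
    · simp [MonoidHom.comp_apply, raagJoinInv, MonoidHom.noncommCoprod_apply]
  · apply MonoidHom.ext
    rintro ⟨m, n⟩
    have hm : raagJoinHom G₁ G₂ (raagInl G₁ G₂ m) = (m, 1) := DFunLike.congr_fun e1 m
    have hn : raagJoinHom G₁ G₂ (raagInr G₁ G₂ n) = (1, n) := DFunLike.congr_fun e2 n
    have hinv : raagJoinInv G₁ G₂ (m, n) = raagInl G₁ G₂ m * raagInr G₁ G₂ n := rfl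
    simp [MonoidHom.comp_apply, hinv, map_mul, hm, hn]
end Join

/-- If `Γ` is the join of two nonempty graphs `Γ₁` and `Γ₂`, then
`rank(A_Γ) = rank(A_{Γ₁}) + rank(A_{Γ₂})`; in particular `rank(A_Γ) ≥ 2`. -/
theorem stmt_19 {V₁ V₂ : Type*} [Fintype V₁] [Fintype V₂] [Nonempty V₁] [Nonempty V₂]
    (G₁ : SimpleGraph V₁) (G₂ : SimpleGraph V₂) :
    algRank (RAAG (G₁.graphJoin G₂)) = algRank (RAAG G₁) + algRank (RAAG G₂) ∧
      2 ≤ algRank (RAAG (G₁.graphJoin G₂)) := by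
  have e : PresentedGroup (raagRels (G₁.graphJoin G₂)) ≃*
      PresentedGroup (raagRels G₁) × PresentedGroup (raagRels G₂) := raagJoinEquiv G₁ G₂
  have h1 : algRank (RAAG (G₁.graphJoin G₂)) = algRank (RAAG G₁) + algRank (RAAG G₂) := by
    have h2 := algRank_congr e
    rw [algRank_prod] at h2
    exact h2
  refine ⟨h1, ?_⟩
  rw [h1]
  have r1 : 1 ≤ algRank (RAAG G₁) := one_le_algRank_raag G₁
  have r2 : 1 ≤ algRank (RAAG G₂) := one_le_algRank_raag G₂
  calc (2 : ℕ∞) = 1 + 1 := by norm_num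
    _ ≤ algRank (RAAG G₁) + algRank (RAAG G₂) := add_le_add r1 r2
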